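/- arXiv:2106.11387 — 6 statements merged into one kernel-verified Lean document; each statement's English description precedes it below -/
import Mathlib

section
/- Let there be finitely many balls with colors in [c], with n_1 ≥ n_2 ≥ ... ≥ n_c balls of each color. If n_1 ≤ n_2 + n_3 + ... + n_c, then the balls can be arranged in a cyclic sequence such that no two adjacent balls (including the pair closing the cycle) have the same color. -/
open Finset

/-- Auxiliary version with the total number of balls generalized to a variable. -/
theorem cyclic_rainbow_aux (c : ℕ) (hc : 0 < c) (n : Fin c → ℕ)
    (hmono : Antitone n)
    (hsum : n ⟨0, hc⟩ ≤ ∑ j ∈ Finset.univ.erase ⟨0, hc⟩, n j)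
    (N : ℕ) (hN : N = ∑ i, n i) :
    ∃ f : Fin N → Fin c,
      (∀ i : Fin c, (Finset.univ.filter (fun k => f k = i)).card = n i) ∧
      (∀ k : Fin N, f k ≠ f (finRotate _ k)) := by
  classical
  -- the color sizes as a function on ℕ
  set nn : ℕ → ℕ := fun j => if h : j < c then n ⟨j, h⟩ else 0 with hnn
  -- partial sums
  set S : ℕ → ℕ := fun j => ∑ k ∈ Finset.range j, nn k with hS
  have hSmono : Monotone S := fun a b hab =>
    Finset.sum_le_sum_of_subset (Finset.range_subset_range.2 hab)
  have hS0 : S 0 = 0 := by simp [hS]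
  have hSsucc : ∀ j, S (j + 1) = S j + nn j := fun j => Finset.sum_range_succ _ _
  have hSc : S c = N := by
    rw [hN]
    show (∑ k ∈ Finset.range c, nn k) = ∑ i, n i
    rw [← Fin.sum_univ_eq_sum_range nn c]
    refine Finset.sum_congr rfl fun i _ => ?_
    simp [hnn, i.2]
  -- the color of ball `b` in the sorted order
  set col : ℕ → ℕ := fun b => Nat.findGreatest (fun i => S i ≤ b) c with hcol
  have hcol_le : ∀ b, col b ≤ c := fun b => Nat.findGreatest_le c
  have hcol_spec1 : ∀ b, S (col b) ≤ b := fun b =>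
    Nat.findGreatest_spec (P := fun i => S i ≤ b) (Nat.zero_le c) (by simp [hS0])
  have hcol_lt : ∀ b, b < N → col b < c := by
    intro b hb
    rcases lt_or_eq_of_le (hcol_le b) with h | h
    · exact h
    · exfalso; have := hcol_spec1 b; rw [h, hSc] at this; omega
  have hcol_spec2 : ∀ b, b < N → b < S (col b + 1) := by
    intro b hb
    by_contra h
    push_neg at h
    have h1 : col b + 1 ≤ c := hcol_lt b hb
    have h2 : col b + 1 ≤ col b := Nat.le_findGreatest (P := fun i => S i ≤ b) h1 h
    omega
  have hcol_eq : ∀ b i, i < c → S i ≤ b → b < S (i + 1) → col b = i := by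
    intro b i hi h1 h2
    have hge : i ≤ col b := Nat.le_findGreatest (le_of_lt hi) h1
    rcases lt_or_eq_of_le hge with h | h
    · exfalso
      have : S (i + 1) ≤ S (col b) := hSmono h
      have := hcol_spec1 b
      omega
    · exact h.symm
  -- total is at least twice the largest class
  have h2n0 : 2 * n ⟨0, hc⟩ ≤ N := by
    have : n ⟨0, hc⟩ + ∑ j ∈ Finset.univ.erase ⟨0, hc⟩, n j = ∑ i, n i :=
      Finset.add_sum_erase _ n (Finset.mem_univ _)
    omega
  -- each class is at most the largest
  have hnn_le : ∀ j, nn j ≤ n ⟨0, hc⟩ := by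
    intro j
    by_cases h : j < c
    · simpa [hnn, h] using hmono (show (⟨0, hc⟩ : Fin c) ≤ ⟨j, h⟩ from Fin.mk_le_mk.2 (Nat.zero_le _))
    · simp [hnn, h]
  -- if i ≥ 1 then S i ≥ n 0
  have hSge : ∀ i, 0 < i → n ⟨0, hc⟩ ≤ S i := by
    intro i hi
    have h0 : (0 : ℕ) ∈ Finset.range i := Finset.mem_range.2 hi
    have := Finset.single_le_sum (f := nn) (fun k _ => Nat.zero_le _) h0
    simpa [hnn, hc] using this
  -- counting the balls in a color class (as natural numbers)
  have hcount : ∀ i : Fin c,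
      ((Finset.range N).filter fun x => col x = i.1).card = n i := by
    intro i
    have hIco : ((Finset.range N).filter fun x => col x = i.1)
        = Finset.Ico (S i.1) (S (i.1 + 1)) := by
      ext x
      simp only [Finset.mem_filter, Finset.mem_range, Finset.mem_Ico]
      constructor
      · rintro ⟨hx, hcx⟩
        exact ⟨hcx ▸ hcol_spec1 x, hcx ▸ hcol_spec2 x hx⟩
      · rintro ⟨h1, h2⟩
        have hxN : x < N := by
          have : S (i.1 + 1) ≤ S c := hSmono i.2
          omega
        exact ⟨hxN, hcol_eq x i.1 i.2 h1 h2⟩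
    rw [hIco, Nat.card_Ico, hSsucc]
    have : nn i.1 = n i := by simp [hnn, i.2]
    omega
  -- transfer counting from Fin N to range N
  have hcount' : ∀ i : Fin c,
      ((Finset.univ : Finset (Fin N)).filter fun b => col b.1 = i.1).card = n i := by
    intro i
    rw [← hcount i]
    refine Finset.card_bij (fun b _ => b.1) ?_ ?_ ?_
    · intro b hb
      simp only [Finset.mem_filter, Finset.mem_univ, true_and] at hb
      simp [hb, b.2]
    · intro a _ b _ h
      exact Fin.ext h
    · intro x hx
      simp only [Finset.mem_filter, Finset.mem_range] at hx
      exact ⟨⟨x, hx.1⟩, by simp [hx.2], rfl⟩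
  -- now split on N
  cases N with
  | zero =>
    refine ⟨fun k => k.elim0, ?_, fun k => k.elim0⟩
    intro i
    have hni : n i = 0 := by
      have h0 : ∑ j, n j = 0 := hN.symm
      exact Finset.sum_eq_zero_iff.mp h0 i (Finset.mem_univ _)
    simp [hni]
  | succ M =>
    -- the interleaving map: even positions get the first half of sorted balls
    set H : ℕ := (M + 2) / 2 with hH
    have hgbound : ∀ p : Fin (M + 1),
        (if p.1 % 2 = 0 then p.1 / 2 else H + p.1 / 2) < M + 1 := by
      intro p
      have := p.2
      split <;> omega
    set g : Fin (M + 1) → Fin (M + 1) :=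
      fun p => ⟨if p.1 % 2 = 0 then p.1 / 2 else H + p.1 / 2, hgbound p⟩ with hg
    have hginj : Function.Injective g := by
      intro p q h
      have hp := p.2
      have hq := q.2
      simp only [hg, Fin.mk.injEq] at h
      apply Fin.ext
      split_ifs at h <;> omega
    -- the arrangement
    refine ⟨fun k => ⟨col (g k).1, hcol_lt _ (g k).2⟩, ?_, ?_⟩
    · -- counting
      intro i
      have hfilter : (Finset.univ.filter
            (fun k : Fin (M + 1) => (⟨col (g k).1, hcol_lt _ (g k).2⟩ : Fin c) = i))
          = Finset.univ.filter (fun k : Fin (M + 1) => col (g k).1 = i.1) := by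
        refine Finset.filter_congr fun k _ => ?_
        constructor
        · intro h; exact congrArg Fin.val h
        · intro h; exact Fin.ext h
      rw [hfilter, ← hcount' i]
      refine Finset.card_bij (fun k _ => g k) ?_ ?_ ?_
      · intro k hk
        simp only [Finset.mem_filter, Finset.mem_univ, true_and] at hk ⊢
        exact hk
      · intro a _ b _ h
        exact hginj h
      · intro b hb
        simp only [Finset.mem_filter, Finset.mem_univ, true_and] at hb
        obtain ⟨k, hk⟩ := (Finite.injective_iff_surjective.mp hginj) b
        refine ⟨k, ?_, hk⟩
        simp only [Finset.mem_filter, Finset.mem_univ, true_and]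
        show col (g k).1 = i.1
        rw [hk]; exact hb
    · -- adjacency
      intro k hEq
      have hEq' : col (g k).1 = col (g (finRotate (M + 1) k)).1 := congrArg Fin.val hEq
      set k' : Fin (M + 1) := finRotate (M + 1) k with hk'
      have hk'val : k'.1 = if k = Fin.last M then 0 else k.1 + 1 := coe_finRotate k
      set a : ℕ := (g k).1 with ha
      set b : ℕ := (g k').1 with hb
      have haN : a < M + 1 := (g k).2
      have hbN : b < M + 1 := (g k').2
      set i : ℕ := col a with hi
      have hib : col b = i := hEq'.symm
      have h1 : S i ≤ a := hcol_spec1 a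
      have h2 : a < S i + nn i := by
        have := hcol_spec2 a (by omega)
        rwa [hSsucc] at this
      have h3 : S i ≤ b := by rw [← hib]; exact hcol_spec1 b
      have h4 : b < S i + nn i := by
        have := hcol_spec2 b (by omega)
        rwa [hSsucc, hib] at this
      have h5 : nn i ≤ n ⟨0, hc⟩ := hnn_le i
      have hcond : (i = 0 ∧ S i = 0) ∨ n ⟨0, hc⟩ ≤ S i := by
        rcases Nat.eq_zero_or_pos i with h | h
        · exact Or.inl ⟨h, by rw [h, hS0]⟩
        · exact Or.inr (hSge i h)
      have hkM := k.2
      -- compute a and b in each case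
      by_cases hlast : k = Fin.last M
      · have hkv : k.1 = M := by rw [hlast]; rfl
        have hbv : b = if k'.1 % 2 = 0 then k'.1 / 2 else H + k'.1 / 2 := rfl
        rw [hk'val, if_pos hlast] at hbv
        norm_num at hbv
        have hav : a = if k.1 % 2 = 0 then k.1 / 2 else H + k.1 / 2 := rfl
        rcases Nat.even_or_odd M with ⟨t, ht⟩ | ⟨t, ht⟩
        · -- M even, so k.1 = M even, a = M/2, b = 0
          rw [if_pos (by omega)] at hav
          omega
        · -- M odd, a = H + M/2, b = 0
          rw [if_neg (by omega)] at hav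
          omega
      · have hkv : k.1 < M := by
          rcases lt_or_eq_of_le (Nat.lt_succ_iff.mp hkM) with h | h
          · exact h
          · exact absurd (Fin.ext h : k = Fin.last M) hlast
        have hbv : b = if (k.1 + 1) % 2 = 0 then (k.1 + 1) / 2 else H + (k.1 + 1) / 2 := by
          have : b = if k'.1 % 2 = 0 then k'.1 / 2 else H + k'.1 / 2 := rfl
          rwa [hk'val, if_neg hlast] at this
        have hav : a = if k.1 % 2 = 0 then k.1 / 2 else H + k.1 / 2 := rfl
        rcases Nat.even_or_odd k.1 with ⟨t, ht⟩ | ⟨t, ht⟩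
        · -- k even: a = k/2, b = H + k/2 : distance H
          rw [if_pos (by omega)] at hav
          rw [if_neg (by omega)] at hbv
          omega
        · -- k odd: a = H + k/2, b = k/2 + 1 : distance H - 1, the delicate case
          rw [if_neg (by omega)] at hav
          rw [if_pos (by omega)] at hbv
          omega

/-- Balls with colors in `Fin c`, `n i` balls of color `i`, sizes nonincreasing.
If the largest color class is at most the sum of the others, the balls can be
arranged in a cyclic sequence with no two adjacent balls of the same color. -/
theorem cyclic_rainbow_arrangement (c : ℕ) (hc : 0 < c) (n : Fin c → ℕ)
    (hmono : Antitone n)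
    (hsum : n ⟨0, hc⟩ ≤ ∑ j ∈ Finset.univ.erase ⟨0, hc⟩, n j) :
    ∃ f : Fin (∑ i, n i) → Fin c,
      (∀ i : Fin c, (Finset.univ.filter (fun k => f k = i)).card = n i) ∧
      (∀ k : Fin (∑ i, n i), f k ≠ f (finRotate _ k)) := by
  exact cyclic_rainbow_aux c hc n hmono hsum _ rfl
end

section
/- Under the hypotheses of the cyclic-arrangement lemma (n_1 ≤ n_2 + ... + n_c with n_1 ≥ ... ≥ n_c), for any designated ball b, there exists a linear ordering of all balls starting with b in which no two consecutive balls have the same color. -/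
open Finset

private lemma card_filter_get {c : ℕ} (l : List (Fin c)) (i : Fin c) :
    (Finset.univ.filter (fun k : Fin l.length => l.get k = i)).card = l.count i := by
  induction l with
  | nil => simp
  | cons a t ih =>
    have h1 : (∑ k : Fin (t.length + 1), if (a :: t).get k = i then 1 else 0)
        = (if a = i then 1 else 0) + ∑ k : Fin t.length, if t.get k = i then 1 else 0 := by
      rw [Fin.sum_univ_succ]; rfl
    rw [Finset.card_filter]
    show (∑ k : Fin (t.length + 1), if (a :: t).get k = i then 1 else 0) = _
    rw [h1, List.count_cons, ← ih, Finset.card_filter]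
    rcases eq_or_ne a i with h | h
    · simp [h, add_comm]
    · simp [h, Ne.symm h]

private lemma sum_count_eq_length {c : ℕ} (l : List (Fin c)) :
    ∑ i : Fin c, l.count i = l.length := by
  induction l with
  | nil => simp
  | cons a t ih =>
    simp [List.count_cons, Finset.sum_add_distrib, ih]

private lemma rainbow_aux {c : ℕ} (M : ℕ) :
    ∀ (m : Fin c → ℕ) (p : Fin c), (∑ i, m i = M) → (2 * m p ≤ M) →
    (∀ i, 2 * m i ≤ M + 1) →
    ∃ l : List (Fin c), (∀ i, l.count i = m i) ∧ l.Chain' (· ≠ ·) ∧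
      ∀ x ∈ l.head?, x ≠ p := by
  induction M with
  | zero =>
    intro m p hsum _ _
    refine ⟨[], fun i => ?_, by simp [List.Chain'], by simp⟩
    have := Finset.sum_eq_zero_iff.mp hsum i (Finset.mem_univ i)
    simp [this]
  | succ s ih =>
    intro m p hsum hp hall
    have hex : ∃ q₀, q₀ ≠ p ∧ 1 ≤ m q₀ := by
      by_contra h
      push_neg at h
      have hz : ∀ i ∈ Finset.univ.erase p, m i = 0 := by
        intro i hi
        have := h i (Finset.ne_of_mem_erase hi)
        omega
      have : ∑ i, m i = m p := by
        rw [← Finset.add_sum_erase _ _ (Finset.mem_univ p),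
          Finset.sum_eq_zero hz]
        omega
      omega
    obtain ⟨q₀, hq₀p, hq₀⟩ := hex
    obtain ⟨q, hqmem, hqmax⟩ := Finset.exists_max_image (Finset.univ.erase p) m
      ⟨q₀, Finset.mem_erase.mpr ⟨hq₀p, Finset.mem_univ q₀⟩⟩
    have hqp : q ≠ p := Finset.ne_of_mem_erase hqmem
    have hq1 : 1 ≤ m q :=
      le_trans hq₀ (hqmax q₀ (Finset.mem_erase.mpr ⟨hq₀p, Finset.mem_univ q₀⟩))
    set m' := Function.update m q (m q - 1) with hm'
    have hq' : m' q = m q - 1 := Function.update_self _ _ _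
    have hne' : ∀ i, i ≠ q → m' i = m i := fun i hi => Function.update_of_ne hi _ _
    have hsum' : ∑ i, m' i = s := by
      have h1 : ∑ i, m' i + 1 = ∑ i, m i := by
        rw [← Finset.add_sum_erase _ m' (Finset.mem_univ q),
          ← Finset.add_sum_erase _ m (Finset.mem_univ q)]
        have : ∑ i ∈ Finset.univ.erase q, m' i = ∑ i ∈ Finset.univ.erase q, m i :=
          Finset.sum_congr rfl fun i hi => hne' i (Finset.ne_of_mem_erase hi)
        rw [this]
        omega
      omega
    have hp' : 2 * m' q ≤ s := by
      have h2 := hall q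
      omega
    have hall' : ∀ i, 2 * m' i ≤ s + 1 := by
      intro i
      rcases eq_or_ne i q with rfl | hiq
      · omega
      · rw [hne' i hiq]
        rcases eq_or_ne i p with rfl | hip
        · omega
        · have hle : m i ≤ m q := hqmax i (Finset.mem_erase.mpr ⟨hip, Finset.mem_univ i⟩)
          have : m i + m q ≤ ∑ j, m j := by
            have := Finset.add_sum_erase _ m (Finset.mem_univ i)
            have hqe : q ∈ Finset.univ.erase i :=
              Finset.mem_erase.mpr ⟨Ne.symm hiq, Finset.mem_univ q⟩
            have h3 : m q ≤ ∑ j ∈ Finset.univ.erase i, m j :=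
              Finset.single_le_sum (fun j _ => Nat.zero_le _) hqe
            omega
          omega
    obtain ⟨l', hcount', hchain', hhead'⟩ := ih m' q hsum' hp' hall'
    refine ⟨q :: l', fun i => ?_, ?_, ?_⟩
    · rw [List.count_cons, hcount']
      rcases eq_or_ne i q with rfl | hiq
      · rw [hq']; simp; omega
      · rw [hne' i hiq]; simp [Ne.symm hiq]
    · show List.IsChain _ _; rw [List.isChain_cons]
      exact ⟨fun y hy => Ne.symm (hhead' y hy), hchain'⟩
    · intro x hx
      simp only [List.head?_cons, Option.mem_def, Option.some.injEq] at hx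
      subst hx; exact hqp

/-- Under the hypotheses of the cyclic-arrangement lemma, for any designated
ball (of a color `b` with at least one ball) there is a linear ordering of all
balls starting with that ball in which no two consecutive balls share a color. -/
theorem linear_rainbow_arrangement (c : ℕ) (hc : 0 < c) (n : Fin c → ℕ)
    (hmono : Antitone n)
    (hsum : n ⟨0, hc⟩ ≤ ∑ j ∈ Finset.univ.erase ⟨0, hc⟩, n j)
    (b : Fin c) (hb : 1 ≤ n b) :
    ∃ f : Fin (∑ i, n i) → Fin c,
      (∀ i : Fin c, (Finset.univ.filter (fun k => f k = i)).card = n i) ∧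
      (∀ h0 : 0 < ∑ i, n i, f ⟨0, h0⟩ = b) ∧
      (∀ k : ℕ, ∀ hk : k + 1 < ∑ i, n i,
        f ⟨k, Nat.lt_of_succ_lt hk⟩ ≠ f ⟨k + 1, hk⟩) := by
  set M := ∑ i, n i with hM
  have hM1 : 1 ≤ M := le_trans hb (Finset.single_le_sum (fun j _ => Nat.zero_le _)
    (Finset.mem_univ b))
  have hmax : ∀ i, 2 * n i ≤ M := by
    intro i
    have h0 : M = n ⟨0, hc⟩ + ∑ j ∈ Finset.univ.erase ⟨0, hc⟩, n j :=
      (Finset.add_sum_erase _ n (Finset.mem_univ _)).symm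
    rcases eq_or_ne i ⟨0, hc⟩ with rfl | hi
    · omega
    · have h1 : n i ≤ n ⟨0, hc⟩ := hmono (by simp [Fin.le_def])
      have h2 : n i ≤ ∑ j ∈ Finset.univ.erase ⟨0, hc⟩, n j :=
        Finset.single_le_sum (fun j _ => Nat.zero_le _)
          (Finset.mem_erase.mpr ⟨hi, Finset.mem_univ i⟩)
      omega
  set m := Function.update n b (n b - 1) with hm
  have hb' : m b = n b - 1 := Function.update_self _ _ _
  have hne' : ∀ i, i ≠ b → m i = n i := fun i hi => Function.update_of_ne hi _ _
  have hsumm : ∑ i, m i = M - 1 := by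
    have h1 : ∑ i, m i + 1 = ∑ i, n i := by
      rw [← Finset.add_sum_erase _ m (Finset.mem_univ b),
        ← Finset.add_sum_erase _ n (Finset.mem_univ b)]
      have : ∑ i ∈ Finset.univ.erase b, m i = ∑ i ∈ Finset.univ.erase b, n i :=
        Finset.sum_congr rfl fun i hi => hne' i (Finset.ne_of_mem_erase hi)
      rw [this]
      omega
    omega
  have hpb : 2 * m b ≤ M - 1 := by
    have := hmax b
    omega
  have hallm : ∀ i, 2 * m i ≤ (M - 1) + 1 := by
    intro i
    rcases eq_or_ne i b with h | h
    · rw [h]; have := hmax b; omega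
    · rw [hne' i h]
      have := hmax i; omega
  obtain ⟨l', hcount', hchain', hhead'⟩ := rainbow_aux (M - 1) m b hsumm hpb hallm
  set l : List (Fin c) := b :: l' with hl
  have hlcount : ∀ i, l.count i = n i := by
    intro i
    rw [hl, List.count_cons, hcount']
    rcases eq_or_ne i b with h | h
    · rw [h, hb']; simp; omega
    · rw [hne' i h]; simp [Ne.symm h]
  have hlen : l.length = M := by
    have h1 : ∑ i : Fin c, l.count i = ∑ i, n i :=
      Finset.sum_congr rfl fun i _ => hlcount i
    rw [← sum_count_eq_length l, h1]
  refine ⟨fun k => l.get (Fin.cast hlen.symm k), ?_, ?_, ?_⟩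
  · intro i
    rw [← hlcount i, ← card_filter_get l i]
    exact Finset.card_equiv (finCongr hlen.symm)
      (fun k => by simp [finCongr, Fin.cast])
  · intro h0
    simp [hl]
  · intro k hk
    have hchain : l.Chain' (· ≠ ·) := by
      rw [hl]; show List.IsChain _ _; rw [List.isChain_cons]
      exact ⟨fun y hy => Ne.symm (hhead' y hy), hchain'⟩
    exact List.isChain_iff_getElem.mp hchain k (by rw [hlen]; omega)
end

section
/- Construct a multiset from c color classes of sizes n_1 ≥ n_2 ≥ ... ≥ n_c with total N, and place balls onto n_1 stacks by repeatedly cycling through the stacks in order, going through colors from most prevalent to least prevalent. Then no stack contains two balls of the same color. -/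
open Finset

/-- Place balls from `c` color classes of nonincreasing sizes `n 0 ≥ n 1 ≥ …`
onto `n 0` stacks by cycling through the stacks, processing colors from most
prevalent to least prevalent: the `j`-th ball of color `i` (in this global
order, its global index being `(∑ j' < i, n j') + j`) lands on stack
`global index mod n 0`. Then no stack receives two balls of the same color. -/
theorem stacks_no_repeated_color (c : ℕ) (hc : 0 < c) (n : Fin c → ℕ)
    (hmono : Antitone n) :
    ∀ i : Fin c, ∀ j₁ j₂ : ℕ, j₁ < n i → j₂ < n i → j₁ ≠ j₂ →
      ((∑ j' ∈ Finset.univ.filter (fun j' => j' < i), n j') + j₁) % n ⟨0, hc⟩ ≠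
      ((∑ j' ∈ Finset.univ.filter (fun j' => j' < i), n j') + j₂) % n ⟨0, hc⟩ := by
  intro i j₁ j₂ h₁ h₂ hne h
  have hn : n i ≤ n ⟨0, hc⟩ := hmono (show ((⟨0, hc⟩ : Fin c) ≤ i) from Nat.zero_le i.val)
  have : j₁ % n ⟨0, hc⟩ = j₂ % n ⟨0, hc⟩ :=
    (Nat.ModEq.add_left_cancel' _ h)
  rw [Nat.mod_eq_of_lt (lt_of_lt_of_le h₁ hn), Nat.mod_eq_of_lt (lt_of_lt_of_le h₂ hn)] at this
  exact hne this
end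

section
/- Let X be a binomial random variable with m trials and success probability p. Then P(X ≤ ⌊E[X]⌋ ) ≥ 1/2 fails in general, but the following weaker statement holds: P(X ≤ ⌈m·p⌉) ≥ 1/2; equivalently, the median of a Binomial(m,p) distribution is at most ⌈m·p⌉. -/
open scoped ENNReal NNReal

open Real Set Finset intervalIntegral


lemma core_poly (a b : ℕ) (ha : 1 ≤ a) (hb : 1 ≤ b) (u : ℝ) (hu1 : 1 ≤ u)
    (hu2 : (a : ℝ) * u ≤ (a : ℝ) + b) :
    u ^ (2*a+b) * (((a : ℝ) + b) - a*u) ^ b ≤ (((a : ℝ) + b)*u - a) ^ b := by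
  have ha' : (1:ℝ) ≤ a := by exact_mod_cast ha
  have hb' : (1:ℝ) ≤ b := by exact_mod_cast hb
  have hu0 : (0:ℝ) < u := lt_of_lt_of_le one_pos hu1
  have hX : (0:ℝ) < ((a:ℝ)+b)*u - a := by nlinarith
  rcases eq_or_lt_of_le hu2 with h | h
  · have h0 : ((a:ℝ)+b) - a*u = 0 := by linarith
    rw [h0, zero_pow (by omega : b ≠ 0), mul_zero]
    positivity
  · set n : ℝ := (a:ℝ) + b with hn
    have hn0 : (0:ℝ) < n := by positivity
    set ψ : ℝ → ℝ := fun x => b * Real.log (n*x - a) - (2*(a:ℝ)+b) * Real.log x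
        - b * Real.log (n - a*x) with hψ
    have hderiv : ∀ x ∈ interior (Icc (1:ℝ) u), HasDerivAt ψ
        (((a:ℝ)*n*(2*(a:ℝ)+b)*(x-1)^2) / (x*(n*x-a)*(n-a*x))) x := by
      intro x hx
      rw [interior_Icc] at hx
      obtain ⟨hx1, hxu⟩ := hx
      have hx0 : (0:ℝ) < x := by linarith
      have hXx : (0:ℝ) < n*x - a := by nlinarith
      have hYx : (0:ℝ) < n - a*x := by nlinarith
      have d1 : HasDerivAt (fun x : ℝ => Real.log (n*x - a)) (n / (n*x - a)) x := by
        have := ((hasDerivAt_id x).const_mul n |>.sub_const (a:ℝ)).log (ne_of_gt hXx)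
        simpa using this
      have d2 : HasDerivAt (fun x : ℝ => Real.log x) (1/x) x := by
        simpa using (hasDerivAt_id x).log (ne_of_gt hx0)
      have d3 : HasDerivAt (fun x : ℝ => Real.log (n - a*x)) ((-(a:ℝ)) / (n - a*x)) x := by
        have := (((hasDerivAt_id x).const_mul (a:ℝ)).const_sub n).log (ne_of_gt hYx)
        simpa using this
      have hd := ((d1.const_mul (b:ℝ)).sub (d2.const_mul (2*(a:ℝ)+b))).sub
        (d3.const_mul (b:ℝ))
      refine hd.congr_deriv (Eq.symm ?_)
      field_simp
      ring
    have hmono : MonotoneOn ψ (Icc 1 u) := by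
      apply monotoneOn_of_deriv_nonneg (convex_Icc 1 u)
      · have c1 : ContinuousOn (fun x : ℝ => Real.log (n*x - a)) (Icc 1 u) := by
          apply ContinuousOn.log (by fun_prop)
          intro x hx
          have : (0:ℝ) < n*x - a := by nlinarith [hx.1, hx.2]
          exact ne_of_gt this
        have c2 : ContinuousOn (fun x : ℝ => Real.log x) (Icc 1 u) := by
          apply ContinuousOn.log (by fun_prop)
          intro x hx
          have : (0:ℝ) < x := by linarith [hx.1]
          exact ne_of_gt this
        have c3 : ContinuousOn (fun x : ℝ => Real.log (n - a*x)) (Icc 1 u) := by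
          apply ContinuousOn.log (by fun_prop)
          intro x hx
          have : (0:ℝ) < n - a*x := by nlinarith [hx.1, hx.2]
          exact ne_of_gt this
        exact ((continuousOn_const.mul c1).sub (continuousOn_const.mul c2)).sub
          (continuousOn_const.mul c3)
      · intro x hx
        exact ((hderiv x hx).differentiableAt).differentiableWithinAt
      · intro x hx
        rw [(hderiv x hx).deriv]
        rw [interior_Icc] at hx
        have hx0 : (0:ℝ) < x := by linarith [hx.1]
        have hXx : (0:ℝ) < n*x - a := by nlinarith [hx.1]
        have hYx : (0:ℝ) < n - a*x := by nlinarith [hx.2]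
        positivity
    have h10 : ψ 1 = 0 := by
      simp only [hψ, mul_one, Real.log_one, mul_zero]
      ring_nf
    have hu' : (0:ℝ) ≤ ψ u := by
      rw [← h10]
      exact hmono ⟨le_refl 1, hu1⟩ ⟨hu1, le_refl u⟩ hu1
    -- now exponentiate
    have hY : (0:ℝ) < n - a*u := by linarith
    have hL : (0:ℝ) < u ^ (2*a+b) * (n - a*u) ^ b := by positivity
    have hR : (0:ℝ) < (n*u - a) ^ b := by positivity
    rw [← Real.log_le_log_iff hL hR]
    rw [Real.log_mul (by positivity) (by positivity)]
    simp only [Real.log_pow]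
    have : (0:ℝ) ≤ b * Real.log (n*u - a) - (2*(a:ℝ)+b) * Real.log u
        - b * Real.log (n - a*u) := hu'
    push_cast
    linarith


lemma ptwise (a b : ℕ) (ha : 1 ≤ a) (hb : 1 ≤ b) (u : ℝ) (hu1 : 1 ≤ u)
    (hu2 : (a:ℝ)*u ≤ (a:ℝ)+b) :
    ((a:ℝ)/((a:ℝ)+b)) * (((a:ℝ)/((a:ℝ)+b)*u)^(a-1) * (1-(a:ℝ)/((a:ℝ)+b)*u)^b)
    ≤ ((a:ℝ)/((a:ℝ)+b)/u^2) * (((a:ℝ)/((a:ℝ)+b)/u)^(a-1) * (1-(a:ℝ)/((a:ℝ)+b)/u)^b) := by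
  obtain ⟨a', rfl⟩ : ∃ a', a = a' + 1 := ⟨a - 1, by omega⟩
  set A : ℝ := ((a' + 1 : ℕ) : ℝ) with hA
  have hA0 : (0:ℝ) < A := by positivity
  set n : ℝ := A + b with hn
  have hb0 : (0:ℝ) < b := by exact_mod_cast hb
  have hn0 : (0:ℝ) < n := by positivity
  have hu0 : (0:ℝ) < u := lt_of_lt_of_le one_pos hu1
  set C : ℝ := (A/n)^(a'+1) / (n^b * u^(a'+1+b+1)) with hC
  have hC0 : (0:ℝ) ≤ C := by positivity
  have key := core_poly (a'+1) b ha hb u hu1 (by push_cast [hA, hn] at hu2 ⊢; linarith)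
  have e1 : (A/n) * ((A/n*u)^(a'+1-1) * (1-A/n*u)^b) = C * (u^(2*(a'+1)+b) * (n - A*u)^b) := by
    have h1 : (1 - A/n*u) = (n - A*u)/n := by field_simp
    rw [h1]
    simp only [Nat.add_sub_cancel, hC, div_div, div_pow, mul_pow]
    field_simp
    ring
  have e2 : (A/n/u^2) * ((A/n/u)^(a'+1-1) * (1-A/n/u)^b) = C * ((n*u - A)^b) := by
    have h1 : (1 - A/n/u) = (n*u - A)/(n*u) := by field_simp
    rw [h1]
    simp only [Nat.add_sub_cancel, hC, div_div, div_pow, mul_pow]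
    field_simp
    ring
  calc (A/n) * ((A/n*u)^(a'+1-1) * (1-A/n*u)^b)
      = C * (u^(2*(a'+1)+b) * (n - A*u)^b) := e1
    _ ≤ C * ((n*u - A)^b) := by
        apply mul_le_mul_of_nonneg_left _ hC0
        convert key using 3 <;> push_cast [hA, hn] <;> ring
    _ = (A/n/u^2) * ((A/n/u)^(a'+1-1) * (1-A/n/u)^b) := e2.symm


lemma hasDeriv_G (a b : ℕ) (ha : 1 ≤ a) (q : ℝ) :
    HasDerivAt (fun q : ℝ => ∑ i ∈ Finset.range (b+1),
      ((a+b).choose (a+i) : ℝ) * q^(a+i) * (1-q)^(b-i))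
    (((a+b : ℕ) : ℝ) * (((a+b-1).choose (a-1) : ℕ) : ℝ) * q^(a-1) * (1-q)^b) q := by
  set T : ℕ → ℝ := fun i => ((a+b : ℕ) : ℝ) * (((a+b-1).choose (a-1+i) : ℕ) : ℝ)
      * q^(a-1+i) * (1-q)^(b-i) with hT
  have hterm : ∀ i ∈ Finset.range (b+1),
      HasDerivAt (fun q : ℝ => ((a+b).choose (a+i) : ℝ) * q^(a+i) * (1-q)^(b-i))
        (T i - T (i+1)) q := by
    intro i hi
    rw [Finset.mem_range] at hi
    have d2 : HasDerivAt (fun q : ℝ => (1-q)^(b-i))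
        (-(((b-i : ℕ) : ℝ) * (1-q)^(b-i-1))) q := by
      have h0 : HasDerivAt (fun q : ℝ => 1 - q) (-1) q := by
        simpa using (hasDerivAt_id q).const_sub 1
      have := (hasDerivAt_pow (b-i) (1-q)).comp q h0
      simpa [mul_comm, Function.comp_def] using this
    have d := ((hasDerivAt_pow (a+i) q).const_mul ((a+b).choose (a+i) : ℝ)).mul d2
    refine d.congr_deriv (Eq.symm ?_)
    have id1 : (a+b) * ((a+b-1).choose (a-1+i)) = (a+b).choose (a+i) * (a+i) := by
      have := Nat.add_one_mul_choose_eq (a+b-1) (a-1+i)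
      have e1 : a+b-1+1 = a+b := by omega
      have e2 : a-1+i+1 = a+i := by omega
      rw [e1, e2] at this
      exact this
    have id2 : (a+b) * ((a+b-1).choose (a+i)) = (a+b).choose (a+i) * (b-i) := by
      have h1 := Nat.add_one_mul_choose_eq (a+b-1) (a+i)
      have e1 : a+b-1+1 = a+b := by omega
      rw [e1] at h1
      have h2 := Nat.choose_succ_right_eq (a+b) (a+i)
      have e3 : a+b-(a+i) = b-i := by omega
      rw [e3] at h2
      omega
    have c1 : ((a+b : ℕ) : ℝ) * (((a+b-1).choose (a-1+i) : ℕ) : ℝ)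
        = ((a+b).choose (a+i) : ℝ) * ((a+i : ℕ) : ℝ) := by exact_mod_cast congrArg Nat.cast id1
    have c2 : ((a+b : ℕ) : ℝ) * (((a+b-1).choose (a+i) : ℕ) : ℝ)
        = ((a+b).choose (a+i) : ℝ) * ((b-i : ℕ) : ℝ) := by exact_mod_cast congrArg Nat.cast id2
    have he : a+i-1 = a-1+i := by omega
    have hf : b-i-1 = b-(i+1) := by omega
    have hg : a-1+(i+1) = a+i := by omega
    simp only [hT, he, hf, hg]
    linear_combination q^(a-1+i)*(1-q)^(b-i)*c1 - q^(a+i)*(1-q)^(b-(i+1))*c2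
  have hsum := HasDerivAt.fun_sum hterm
  have htel : ∑ i ∈ Finset.range (b+1), (T i - T (i+1)) = T 0 - T (b+1) :=
    Finset.sum_range_sub' T (b+1)
  rw [htel] at hsum
  have hT0 : T (b+1) = 0 := by
    have : (a+b-1).choose (a-1+(b+1)) = 0 := by
      apply Nat.choose_eq_zero_of_lt
      omega
    simp [hT, this]
  rw [hT0, sub_zero] at hsum
  simpa [hT] using hsum


lemma main_real (n c : ℕ) (p : ℝ) (hp0 : 0 ≤ p) (hp1 : p ≤ 1) (hc : (n:ℝ)*p ≤ c)
    (hcn : c+1 ≤ n) (hc1 : 1 ≤ c) :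
    1/2 ≤ ∑ k ∈ Finset.range (c+1), p^k * (1-p)^(n-k) * (n.choose k : ℝ) := by
  obtain ⟨a, rfl⟩ : ∃ a, n = a + c := ⟨n - c, by omega⟩
  have ha : 1 ≤ a := by omega
  set G : ℝ → ℝ := fun q => ∑ i ∈ Finset.range (c+1),
      ((a+c).choose (a+i) : ℝ) * q^(a+i) * (1-q)^(c-i) with hGdef
  set H : ℝ → ℝ := fun t => t^(a-1) * (1-t)^c with hHdef
  set K : ℝ := ((a+c : ℕ) : ℝ) * (((a+c-1).choose (a-1) : ℕ) : ℝ) with hKdef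
  have hKnn : 0 ≤ K := by positivity
  have hG : ∀ q : ℝ, HasDerivAt G (K * H q) q := by
    intro q
    have := hasDeriv_G a c ha q
    convert this using 1
    simp [hHdef, hKdef]
    ring
  have hHcont : Continuous H := by fun_prop
  have hKH : Continuous (fun t => K * H t) := by fun_prop
  have hFTC : ∀ x y : ℝ, ∫ t in x..y, K * H t = G y - G x := fun x y =>
    integral_eq_sub_of_hasDerivAt (fun t _ => hG t) (hKH.intervalIntegrable x y)
  have hG0 : G 0 = 0 := by
    apply Finset.sum_eq_zero
    intro i _
    have : (0:ℝ)^(a+i) = 0 := zero_pow (by omega)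
    simp [this]
  have hG1 : G 1 = 1 := by
    simp only [hGdef]
    rw [Finset.sum_eq_single c]
    · simp [Nat.choose_self]
    · intro i hi hine
      rw [Finset.mem_range] at hi
      have : (1:ℝ)-1 = 0 := by ring
      rw [this, zero_pow (by omega)]
      ring
    · intro h
      exact absurd (Finset.self_mem_range_succ c) h
  -- setup p₀, u₁
  have hac0 : (0:ℝ) < (a:ℝ)+c := by positivity
  have ha0 : (0:ℝ) < (a:ℝ) := by exact_mod_cast ha
  set p₀ : ℝ := (a:ℝ)/((a:ℝ)+c) with hp₀def
  have hp₀pos : 0 < p₀ := by positivity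
  have hp₀le1 : p₀ ≤ 1 := by
    rw [div_le_one hac0]
    have : (0:ℝ) ≤ c := by positivity
    linarith
  set u₁ : ℝ := ((a:ℝ)+c)/(a:ℝ) with hu₁def
  have hu₁ge1 : 1 ≤ u₁ := by
    rw [le_div_iff₀ ha0]
    have : (0:ℝ) ≤ c := by positivity
    linarith
  have hpu : p₀ * u₁ = 1 := by rw [hp₀def, hu₁def]; field_simp
  -- substitution 1
  have s1 : ∫ t in p₀..(1:ℝ), H t = ∫ x in (1:ℝ)..u₁, p₀ * H (p₀*x) := by
    have h := integral_comp_smul_deriv (a := (1:ℝ)) (b := u₁) (f := fun x => p₀*x)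
      (f' := fun _ => p₀) (g := H)
      (fun x _ => by
        have h' := (hasDerivAt_id x).const_mul p₀
        rw [mul_one] at h'
        exact h')
      continuousOn_const hHcont
    simp only [smul_eq_mul, Function.comp] at h
    rw [h, mul_one, hpu]
  -- substitution 2
  have huIcc : uIcc (1:ℝ) u₁ = Icc 1 u₁ := uIcc_of_le hu₁ge1
  have hxpos : ∀ x ∈ uIcc (1:ℝ) u₁, (0:ℝ) < x := by
    intro x hx
    rw [huIcc] at hx
    linarith [hx.1]
  have s2 : ∫ t in (p₀^2)..p₀, H t = ∫ x in (1:ℝ)..u₁, (p₀/x^2) * H (p₀/x) := by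
    have h := integral_comp_smul_deriv (a := (1:ℝ)) (b := u₁) (f := fun x => p₀/x)
      (f' := fun x => -(p₀/x^2)) (g := H)
      (fun x hx => by
        have hx0 : x ≠ 0 := ne_of_gt (hxpos x hx)
        have := (hasDerivAt_inv hx0).const_mul p₀
        simpa [div_eq_mul_inv, pow_two, mul_inv] using this)
      (by
        apply ContinuousOn.neg
        apply ContinuousOn.div continuousOn_const (by fun_prop)
        intro x hx
        exact pow_ne_zero 2 (ne_of_gt (hxpos x hx)))
      hHcont
    simp only [smul_eq_mul, Function.comp] at h
    have e1 : p₀/1 = p₀ := by ring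
    have e2 : p₀/u₁ = p₀^2 := by
      rw [hu₁def, hp₀def]
      field_simp
    rw [e1, e2] at h
    have h2 : ∫ x in (1:ℝ)..u₁, (p₀/x^2) * H (p₀/x)
        = - ∫ x in (1:ℝ)..u₁, (-(p₀/x^2)) * H (p₀/x) := by
      rw [← intervalIntegral.integral_neg]
      congr 1
      ext x
      ring
    rw [h2, h]
    exact intervalIntegral.integral_symm p₀ (p₀^2)
  -- pointwise comparison
  have s3 : ∫ x in (1:ℝ)..u₁, p₀ * H (p₀*x) ≤ ∫ x in (1:ℝ)..u₁, (p₀/x^2) * H (p₀/x) := by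
    apply intervalIntegral.integral_mono_on hu₁ge1
    · exact (by fun_prop : Continuous fun x => p₀ * H (p₀*x)).intervalIntegrable 1 u₁
    · apply ContinuousOn.intervalIntegrable
      rw [huIcc]
      apply ContinuousOn.mul
      · apply ContinuousOn.div continuousOn_const (by fun_prop)
        intro x hx
        exact pow_ne_zero 2 (ne_of_gt (by linarith [hx.1]))
      · apply Continuous.comp_continuousOn hHcont
        apply ContinuousOn.div continuousOn_const (by fun_prop)
        intro x hx
        exact ne_of_gt (by linarith [hx.1])
    · intro x hx
      have hx1 : 1 ≤ x := hx.1
      have hx2 : (a:ℝ)*x ≤ (a:ℝ)+c := by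
        have : x ≤ u₁ := hx.2
        rw [hu₁def] at this
        rw [← le_div_iff₀' ha0]
        exact this
      have := ptwise a c ha hc1 x hx1 hx2
      simpa [hHdef, hp₀def] using this
  -- positivity of H on [0,1]
  have hHnn : ∀ t ∈ Icc (0:ℝ) 1, 0 ≤ H t := by
    intro t ht
    have : (0:ℝ) ≤ 1 - t := by linarith [ht.2]
    have h0 : (0:ℝ) ≤ t := ht.1
    positivity
  -- s4
  have hint : ∀ x y : ℝ, IntervalIntegrable H MeasureTheory.volume x y :=
    fun x y => hHcont.intervalIntegrable x y
  have s4 : ∫ t in (p₀^2)..p₀, H t ≤ ∫ t in (0:ℝ)..p₀, H t := by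
    have hsplit : (∫ t in (0:ℝ)..(p₀^2), H t) + (∫ t in (p₀^2)..p₀, H t)
        = ∫ t in (0:ℝ)..p₀, H t :=
      integral_add_adjacent_intervals (hint 0 (p₀^2)) (hint (p₀^2) p₀)
    have hnn : 0 ≤ ∫ t in (0:ℝ)..(p₀^2), H t := by
      apply intervalIntegral.integral_nonneg (by positivity)
      intro t ht
      exact hHnn t ⟨ht.1, le_trans ht.2 (by nlinarith)⟩
    linarith
  have key : ∫ t in p₀..(1:ℝ), H t ≤ ∫ t in (0:ℝ)..p₀, H t := by
    rw [s1]
    calc ∫ x in (1:ℝ)..u₁, p₀ * H (p₀*x) ≤ ∫ x in (1:ℝ)..u₁, (p₀/x^2) * H (p₀/x) := s3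
      _ = ∫ t in (p₀^2)..p₀, H t := s2.symm
      _ ≤ ∫ t in (0:ℝ)..p₀, H t := s4
  -- conclude G p₀ ≥ 1/2
  have hGp₀ : G p₀ = K * ∫ t in (0:ℝ)..p₀, H t := by
    rw [← intervalIntegral.integral_const_mul, hFTC, hG0, sub_zero]
  have h1G : 1 - G p₀ = K * ∫ t in p₀..(1:ℝ), H t := by
    rw [← intervalIntegral.integral_const_mul, hFTC, hG1]
  have hhalf : 1/2 ≤ G p₀ := by
    have := mul_le_mul_of_nonneg_left key hKnn
    rw [← hGp₀, ← h1G] at this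
    linarith
  -- G monotone from p₀ to q
  have hq : p₀ ≤ 1 - p := by
    rw [hp₀def, div_le_iff₀ hac0]
    push_cast at hc ⊢
    nlinarith
  have hmono2 : G p₀ ≤ G (1-p) := by
    have hd : G (1-p) - G p₀ = K * ∫ t in p₀..(1-p), H t := by
      rw [← intervalIntegral.integral_const_mul, hFTC]
    have hnn : 0 ≤ ∫ t in p₀..(1-p), H t := by
      apply intervalIntegral.integral_nonneg hq
      intro t ht
      exact hHnn t ⟨le_trans (le_of_lt hp₀pos) ht.1, by linarith [ht.2]⟩
    nlinarith
  -- rewrite sum as G (1-p)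
  have hS : ∑ k ∈ Finset.range (c+1), p^k * (1-p)^((a+c)-k) * ((a+c).choose k : ℝ)
      = G (1-p) := by
    rw [hGdef, ← Finset.sum_range_reflect]
    apply Finset.sum_congr rfl
    intro i hi
    rw [Finset.mem_range] at hi
    have e0 : c + 1 - 1 - i = c - i := by omega
    have e1 : a+c-(c-i) = a+i := by omega
    have e2 : (a+c).choose (c-i) = (a+c).choose (a+i) := by
      rw [show c - i = (a+c)-(a+i) by omega]
      exact Nat.choose_symm (by omega)
    have e3 : (1:ℝ) - (1-p) = p := by ring
    rw [e0, e1, e2, e3]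
    ring
  rw [hS]
  linarith


/-- The median of a `Binomial(m, p)` distribution is at most `⌈m * p⌉`:
`P(X ≤ ⌈m * p⌉) ≥ 1/2`. -/
theorem binomial_median_le_ceil (m : ℕ) (p : ℝ≥0) (hp : (p : ℝ≥0∞) ≤ 1) :
    (1 : ℝ≥0∞) / 2 ≤
      ∑ k ∈ Finset.univ.filter (fun k : Fin (m + 1) => (k : ℕ) ≤ ⌈(m : ℝ≥0) * p⌉₊),
        PMF.binomial p (ENNReal.coe_le_one_iff.mp hp) m k := by
  set c : ℕ := ⌈(m : ℝ≥0) * p⌉₊ with hcdef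
  have hp1 : p ≤ 1 := by exact_mod_cast hp
  have hp1' : (p : ℝ) ≤ 1 := hp1
  have hp0' : (0:ℝ) ≤ p := p.coe_nonneg
  by_cases hcm : m ≤ c
  · -- everything: sum = 1
    have hfil : Finset.univ.filter (fun k : Fin (m + 1) => (k : ℕ) ≤ c) = Finset.univ := by
      apply Finset.filter_true_of_mem
      intro k _
      exact le_trans (Nat.lt_succ_iff.mp k.isLt) hcm
    rw [hfil]
    have h1 : ∑ k : Fin (m+1), PMF.binomial p (ENNReal.coe_le_one_iff.mp hp) m k = 1 := by
      have := (PMF.binomial p (ENNReal.coe_le_one_iff.mp hp) m).tsum_coe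
      rwa [tsum_fintype] at this
    rw [h1]
    exact ENNReal.half_le_self
  · push_neg at hcm
    by_cases hp00 : p = 0
    · -- p = 0 : k = 0 term is 1
      subst hp00
      have h0mem : (0 : Fin (m+1)) ∈ Finset.univ.filter
          (fun k : Fin (m + 1) => (k : ℕ) ≤ c) := by
        simp
      have hterm : PMF.binomial (0:ℝ≥0) (ENNReal.coe_le_one_iff.mp hp) m 0 = 1 := by
        simp [PMF.binomial_apply_zero]
      calc (1:ℝ≥0∞)/2 ≤ 1 := ENNReal.half_le_self
        _ = PMF.binomial (0:ℝ≥0) (ENNReal.coe_le_one_iff.mp hp) m 0 := hterm.symm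
        _ ≤ _ := Finset.single_le_sum (fun k _ => zero_le) h0mem
    · -- main case
      have hc1 : 1 ≤ c := by
        rcases Nat.eq_zero_or_pos c with h0 | h1
        · exfalso
          rw [hcdef] at h0
          have := Nat.ceil_eq_zero.mp h0
          have hm1 : 1 ≤ m := by omega
          have : (m : ℝ≥0) * p = 0 := le_antisymm this (zero_le)
          rcases mul_eq_zero.mp this with h | h
          · have : m = 0 := by exact_mod_cast h
            omega
          · exact hp00 h
        · exact h1
      have hc : (m:ℝ) * (p:ℝ) ≤ c := by
        have := Nat.le_ceil ((m : ℝ≥0) * p)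
        rw [← hcdef] at this
        exact_mod_cast this
      have hmain := main_real m c (p:ℝ) hp0' hp1' hc (by omega) hc1
      -- convert sum
      have hsum : ∑ k ∈ Finset.univ.filter (fun k : Fin (m + 1) => (k : ℕ) ≤ c),
          PMF.binomial p (ENNReal.coe_le_one_iff.mp hp) m k
          = ENNReal.ofReal (∑ j ∈ Finset.range (c+1),
              (p:ℝ)^j * (1-(p:ℝ))^(m-j) * (m.choose j : ℝ)) := by
        have hterm : ∀ k : Fin (m+1), PMF.binomial p (ENNReal.coe_le_one_iff.mp hp) m k
            = ENNReal.ofReal ((p:ℝ)^(k:ℕ) * (1-(p:ℝ))^(m-(k:ℕ)) * (m.choose (k:ℕ) : ℝ)) := by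
          intro k
          rw [PMF.binomial_apply]
          simp only [Fin.val_last]
          rw [ENNReal.ofReal_mul (mul_nonneg (by positivity)
              (pow_nonneg (by linarith) _)),
            ENNReal.ofReal_mul (by positivity)]
          congr 1
          congr 1
          · rw [ENNReal.ofReal_pow hp0', ENNReal.ofReal_coe_nnreal]
          · rw [ENNReal.ofReal_pow (by linarith), ENNReal.ofReal_sub _ hp0',
              ENNReal.ofReal_one, ENNReal.ofReal_coe_nnreal]
          · rw [ENNReal.ofReal_natCast]
        rw [Finset.sum_congr rfl (fun k _ => hterm k)]
        rw [← ENNReal.ofReal_sum_of_nonneg (fun k _ => mul_nonneg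
          (mul_nonneg (by positivity) (pow_nonneg (by linarith) _)) (by positivity))]
        congr 1
        rw [Finset.sum_filter]
        rw [Fin.sum_univ_eq_sum_range (fun j => if j ≤ c then
          (p:ℝ)^j * (1-(p:ℝ))^(m-j) * (m.choose j : ℝ) else 0) (m+1)]
        rw [← Finset.sum_filter]
        congr 1
        ext j
        simp only [Finset.mem_filter, Finset.mem_range]
        omega
      rw [hsum]
      have hhalf : (1:ℝ≥0∞)/2 = ENNReal.ofReal (1/2) := by
        rw [ENNReal.ofReal_div_of_pos (by norm_num), ENNReal.ofReal_one,
          ENNReal.ofReal_ofNat]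
      rw [hhalf]
      exact ENNReal.ofReal_le_ofReal hmain
end

section
/- During a graph search that explores at most s' nodes and, each time a path-suffix of length less than s' is encountered, adds that suffix (of length < s') to the explored set, the explored set never exceeds 2s' nodes; consequently no path of initial length at least 4s' is ever reduced below 2s'. -/
/-- Invariant of the graph-search loop: the explored set starts empty, grows
(while its size is below `s'`) by one node plus possibly a path suffix of fewer
than `s'` nodes per iteration, and stays fixed once its size reaches `s'`.
Then the explored set never exceeds `2 s'` nodes, and consequently a path of
initial length at least `4 s'` is never reduced below `2 s'`. -/
theorem graph_search_invariant (s' : ℕ) (e : ℕ → ℕ) (h0 : e 0 = 0)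
    (hstep : ∀ t, e t < s' → e (t + 1) ≤ e t + s')
    (hstop : ∀ t, s' ≤ e t → e (t + 1) = e t) :
    (∀ t, e t ≤ 2 * s') ∧ (∀ p t : ℕ, 4 * s' ≤ p → 2 * s' ≤ p - e t) := by
  have hb : ∀ t, e t ≤ 2 * s' := by
    intro t
    induction t with
    | zero => omega
    | succ n ih =>
      rcases lt_or_ge (e n) s' with h | h
      · have := hstep n h; omega
      · have := hstop n h; omega
  refine ⟨hb, fun p t hp => ?_⟩
  have := hb t; omega
end

section
/- If every stitch between consecutive paths in a sequence shortens the earlier path's suffix by at most s'' and the later path's prefix by at most s'', and each of the r paths has length exactly s', then the stitched path has length at least r·(s' − 2s''); moreover, each individual hospital owning q of the r paths retains at least q·(s' − 2s'') of its nodes on the stitched path. -/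
open Finset

/-- If stitching a sequence of `r` paths, each of length exactly `s'`, removes
at most `s''` nodes from the end and at most `s''` nodes from the start of each
path (`2 s'' < s'`), then the stitched path has length at least `r (s' − 2 s'')`,
and a hospital owning any subset of `q` of the paths retains at least
`q (s' − 2 s'')` of its nodes. -/
theorem stitched_length_bound (r s' s'' : ℕ) (hss : 2 * s'' < s')
    (loss₁ loss₂ : Fin r → ℕ)
    (h1 : ∀ t, loss₁ t ≤ s'') (h2 : ∀ t, loss₂ t ≤ s'') :
    r * (s' - 2 * s'') ≤ ∑ t : Fin r, (s' - loss₁ t - loss₂ t) ∧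
    ∀ S : Finset (Fin r),
      S.card * (s' - 2 * s'') ≤ ∑ t ∈ S, (s' - loss₁ t - loss₂ t) := by
  have key : ∀ t, s' - 2 * s'' ≤ s' - loss₁ t - loss₂ t := by
    intro t
    have := h1 t; have := h2 t
    omega
  have main : ∀ S : Finset (Fin r),
      S.card * (s' - 2 * s'') ≤ ∑ t ∈ S, (s' - loss₁ t - loss₂ t) := by
    intro S
    calc S.card * (s' - 2 * s'') = ∑ _t ∈ S, (s' - 2 * s'') := by
          rw [Finset.sum_const, smul_eq_mul]
      _ ≤ ∑ t ∈ S, (s' - loss₁ t - loss₂ t) := Finset.sum_le_sum fun t _ => key t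
  refine ⟨?_, main⟩
  simpa using main Finset.univ
end
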